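/- Let ν > 0, c > 0, f_0 > 0, and let a(t) be a solution of the viscous dyadic model on [0, ∞) with a_j(0) ≥ 0 for all j. Then a(t) satisfies the energy inequality |a(t)|² + 2ν ∫_{t₀}^{t} ‖a(τ)‖²_{H¹} dτ ≤ |a(t₀)|² + 2 ∫_{t₀}^{t} f_0 a_0(τ) dτ for all 0 ≤ t₀ ≤ t. -/

import Mathlib

open Filter MeasureTheory intervalIntegral Topology

/-- Right-hand side of the dyadic model ODE for the `j`-th component:
`d/dt a_j = f_j - ν 2^{2j} a_j + 2^{c(j-1)} a_{j-1}² - 2^{cj} a_j a_{j+1}`,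
with the conventions `a_{-1} = 0`, `f_0 = f₀`, `f_j = 0` for `j ≥ 1`. -/
noncomputable def dyadicRHS (ν c f₀ : ℝ) (a : ℕ → ℝ) (j : ℕ) : ℝ :=
  (if j = 0 then f₀ else 0) - ν * (2 : ℝ) ^ (2 * j) * a j
    + (if j = 0 then 0 else (2 : ℝ) ^ (c * ((j : ℝ) - 1)) * a (j - 1) ^ 2)
    - (2 : ℝ) ^ (c * (j : ℝ)) * a j * a (j + 1)

/-- A solution of the dyadic model on `[0, ∞)`: an `l²`-valued function whose
components are differentiable on `[0, ∞)` and satisfy the dyadic system. -/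
def IsSolution (ν c f₀ : ℝ) (a : ℝ → ℕ → ℝ) : Prop :=
  (∀ t : ℝ, 0 ≤ t → Summable (fun j : ℕ => a t j ^ 2)) ∧
  ∀ j : ℕ, ∀ t : ℝ, 0 ≤ t →
    HasDerivWithinAt (fun s : ℝ => a s j) (dyadicRHS ν c f₀ (a t) j) (Set.Ici 0) t

/-- A fixed point of the dyadic model: an `l²` sequence `α` with
`ν 2^{2j} α_j - 2^{c(j-1)} α_{j-1}² + 2^{cj} α_j α_{j+1} = f_j` for all `j ≥ 0`. -/
def IsFixedPoint (ν c f₀ : ℝ) (α : ℕ → ℝ) : Prop :=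
  (Summable fun j : ℕ => α j ^ 2) ∧
  ∀ j : ℕ, dyadicRHS ν c f₀ α j = 0

/-- Telescoping identity for the energy flux of the dyadic model. -/
theorem dyadic_telescope_aux (ν c f₀ : ℝ) (α : ℕ → ℝ) (N : ℕ) :
    ∑ j ∈ Finset.range (N+1), α j * dyadicRHS ν c f₀ α j
    = f₀ * α 0 - ν * ∑ j ∈ Finset.range (N+1), (2 : ℝ) ^ (2 * j) * α j ^ 2
        - (2 : ℝ) ^ (c * (N : ℝ)) * α N ^ 2 * α (N + 1) := by
  unfold dyadicRHS
  induction N with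
  | zero => simp; ring
  | succ n ih =>
      rw [Finset.sum_range_succ, ih,
        Finset.sum_range_succ (fun j => (2:ℝ)^(2*j) * α j ^2) (n+1)]
      have h1 : (((n+1 : ℕ) : ℝ) - 1) = (n : ℝ) := by push_cast; ring
      simp only [if_neg (Nat.succ_ne_zero n), h1, Nat.add_sub_cancel]
      push_cast
      ring

/-- Positivity is preserved by the dyadic model. -/
theorem dyadic_pos_aux (ν c f₀ : ℝ) (hf : 0 < f₀)
    (A : ℝ → ℕ → ℝ)
    (hAcont : ∀ j, Continuous (fun s => A s j))
    (hAderiv : ∀ (j : ℕ) (s : ℝ), 0 ≤ s →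
      HasDerivWithinAt (fun u => A u j) (dyadicRHS ν c f₀ (A s) j) (Set.Ici 0) s)
    (hpos : ∀ j : ℕ, 0 ≤ A 0 j) :
    ∀ (s : ℝ), 0 ≤ s → ∀ j, 0 ≤ A s j := by
  intro s hs j
  set K : ℝ → ℝ := fun u => ν * 2 ^ (2 * j) + (2:ℝ) ^ (c * (j:ℝ)) * A u (j+1) with hK
  have hKcont : Continuous K := continuous_const.add (continuous_const.mul (hAcont (j+1)))
  set F : ℝ → ℝ := fun u => ∫ x in (0:ℝ)..u, K x with hF
  have hFderiv : ∀ u : ℝ, HasDerivAt F (K u) u := fun u =>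
    intervalIntegral.integral_hasDerivAt_right (hKcont.intervalIntegrable _ _)
      (hKcont.stronglyMeasurableAtFilter _ _) hKcont.continuousAt
  set Φ : ℝ → ℝ := fun u => Real.exp (F u) * A u j with hΦ
  have hΦmono : MonotoneOn Φ (Set.Ici 0) := by
    apply monotoneOn_of_hasDerivWithinAt_nonneg (f' := fun x =>
        Real.exp (F x) * K x * A x j + Real.exp (F x) * dyadicRHS ν c f₀ (A x) j)
      (convex_Ici 0)
      (Continuous.continuousOn (by
        have hFc : Continuous F :=
          (Differentiable.continuous (fun u => (hFderiv u).differentiableAt))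
        exact (Real.continuous_exp.comp hFc).mul (hAcont j)))
    · intro x hx
      rw [interior_Ici] at hx ⊢
      exact (((hFderiv x).exp.hasDerivWithinAt).mul
        ((hAderiv j x (le_of_lt hx)).mono Set.Ioi_subset_Ici_self))
    · intro x hx
      have hrw : Real.exp (F x) * K x * A x j + Real.exp (F x) * dyadicRHS ν c f₀ (A x) j
          = Real.exp (F x) * ((if j = 0 then f₀ else 0)
              + (if j = 0 then 0 else (2:ℝ) ^ (c * ((j:ℝ)-1)) * A x (j-1) ^ 2)) := by
        unfold dyadicRHS; rw [hK]; ring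
      rw [hrw]
      apply mul_nonneg (Real.exp_pos _).le
      split_ifs with h
      · simpa using hf.le
      · simp only [zero_add]
        positivity
  have h0 : Φ 0 ≤ Φ s := hΦmono (Set.self_mem_Ici) hs hs
  have hΦ0 : Φ 0 = A 0 j := by
    simp [hΦ, hF, intervalIntegral.integral_same]
  have : 0 ≤ Φ s := le_trans (hΦ0 ▸ hpos j) h0
  exact (mul_nonneg_iff_of_pos_left (Real.exp_pos (F s))).mp this

/-- Galerkin (truncated) energy inequality for the dyadic model. -/
theorem dyadic_key_aux (ν c f₀ : ℝ) (hν : 0 < ν) (hf : 0 < f₀)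
    (A : ℝ → ℕ → ℝ)
    (hAcont : ∀ j, Continuous (fun s => A s j))
    (hAderiv : ∀ (j : ℕ) (s : ℝ), 0 ≤ s →
      HasDerivWithinAt (fun u => A u j) (dyadicRHS ν c f₀ (A s) j) (Set.Ici 0) s)
    (hApos : ∀ (s : ℝ), 0 ≤ s → ∀ j, 0 ≤ A s j)
    (t₀ t : ℝ) (ht₀ : 0 ≤ t₀) (ht₀t : t₀ ≤ t) (N : ℕ) :
    (∑ j ∈ Finset.range (N+1), A t j ^2)
        + 2*ν*(∫ τ in t₀..t, ∑ j ∈ Finset.range (N+1), (2:ℝ)^(2*j) * A τ j ^2)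
      ≤ (∑ j ∈ Finset.range (N+1), A t₀ j ^2) + 2*(∫ τ in t₀..t, f₀ * A τ 0) := by
  have ht : (0:ℝ) ≤ t := le_trans ht₀ ht₀t
  set g : ℝ → ℝ := fun τ => ∑ j ∈ Finset.range (N+1), (2:ℝ)^(2*j) * A τ j ^2 with hgdef
  set E : ℝ → ℝ := fun τ => ∑ j ∈ Finset.range (N+1), A τ j ^2 with hEdef
  have hgcont : Continuous g :=
    continuous_finset_sum _ fun j _ => continuous_const.mul ((hAcont j).pow 2)
  have hEcont : Continuous E :=
    continuous_finset_sum _ fun j _ => (hAcont j).pow 2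
  have hfAcont : Continuous (fun τ => f₀ * A τ 0) := continuous_const.mul (hAcont 0)
  set Φ : ℝ → ℝ := fun u =>
    E u + 2*ν*(∫ τ in (0:ℝ)..u, g τ) - 2*(∫ τ in (0:ℝ)..u, f₀ * A τ 0) with hΦdef
  have hGderiv : ∀ u : ℝ, HasDerivAt (fun v => ∫ τ in (0:ℝ)..v, g τ) (g u) u := fun u =>
    intervalIntegral.integral_hasDerivAt_right (hgcont.intervalIntegrable _ _)
      (hgcont.stronglyMeasurableAtFilter _ _) hgcont.continuousAt
  have hHderiv : ∀ u : ℝ, HasDerivAt (fun v => ∫ τ in (0:ℝ)..v, f₀ * A τ 0) (f₀ * A u 0) u :=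
    fun u => intervalIntegral.integral_hasDerivAt_right (hfAcont.intervalIntegrable _ _)
      (hfAcont.stronglyMeasurableAtFilter _ _) hfAcont.continuousAt
  have hΦanti : AntitoneOn Φ (Set.Ici 0) := by
    apply antitoneOn_of_hasDerivWithinAt_nonpos (f' := fun x =>
        (∑ j ∈ Finset.range (N+1), 2 * A x j ^ 1 * dyadicRHS ν c f₀ (A x) j)
          + 2*ν*(g x) - 2*(f₀ * A x 0))
      (convex_Ici 0)
    · apply Continuous.continuousOn
      have hGc : Continuous (fun v => ∫ τ in (0:ℝ)..v, g τ) :=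
        Differentiable.continuous fun u => (hGderiv u).differentiableAt
      have hHc : Continuous (fun v => ∫ τ in (0:ℝ)..v, f₀ * A τ 0) :=
        Differentiable.continuous fun u => (hHderiv u).differentiableAt
      exact (hEcont.add ((continuous_const.mul hGc))).sub (continuous_const.mul hHc)
    · intro x hx
      rw [interior_Ici] at hx ⊢
      have hE : HasDerivWithinAt E
          (∑ j ∈ Finset.range (N+1), 2 * A x j ^ 1 * dyadicRHS ν c f₀ (A x) j) (Set.Ioi 0) x := by
        apply HasDerivWithinAt.fun_sum
        intro j _
        have := ((hAderiv j x hx.le).mono Set.Ioi_subset_Ici_self).fun_pow 2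
        simpa using this
      exact (hE.add (((hGderiv x).hasDerivWithinAt).const_mul (2*ν))).sub
        (((hHderiv x).hasDerivWithinAt).const_mul 2)
    · intro x hx
      rw [interior_Ici] at hx
      have htel := dyadic_telescope_aux ν c f₀ (A x) N
      have hsum2 : (∑ j ∈ Finset.range (N+1), 2 * A x j ^ 1 * dyadicRHS ν c f₀ (A x) j)
          = 2 * ∑ j ∈ Finset.range (N+1), A x j * dyadicRHS ν c f₀ (A x) j := by
        rw [Finset.mul_sum]; congr 1; ext j; ring
      rw [hsum2, htel, hgdef]
      have h1 : 0 ≤ (2:ℝ) ^ (c * (N:ℝ)) * A x N ^ 2 * A x (N+1) := by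
        have := hApos x hx.le (N+1)
        positivity
      linarith
  have hle : Φ t ≤ Φ t₀ := hΦanti (Set.mem_Ici.mpr ht₀) (Set.mem_Ici.mpr ht) ht₀t
  have hsplitg : (∫ τ in (0:ℝ)..t₀, g τ) + (∫ τ in t₀..t, g τ) = ∫ τ in (0:ℝ)..t, g τ :=
    intervalIntegral.integral_add_adjacent_intervals
      (hgcont.intervalIntegrable _ _) (hgcont.intervalIntegrable _ _)
  have hsplith : (∫ τ in (0:ℝ)..t₀, f₀ * A τ 0) + (∫ τ in t₀..t, f₀ * A τ 0)
      = ∫ τ in (0:ℝ)..t, f₀ * A τ 0 :=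
    intervalIntegral.integral_add_adjacent_intervals
      (hfAcont.intervalIntegrable _ _) (hfAcont.intervalIntegrable _ _)
  simp only [hΦdef] at hle
  rw [← hsplitg, ← hsplith, mul_add, mul_add] at hle
  show E t + 2*ν*(∫ τ in t₀..t, g τ) ≤ E t₀ + 2*(∫ τ in t₀..t, f₀ * A τ 0)
  linarith

/-- Passing to the limit in the Galerkin energy inequality. -/
theorem dyadic_limit_aux (ν : ℝ) (hν : 0 < ν) (A : ℝ → ℕ → ℝ)
    (hAcont : ∀ j, Continuous fun s => A s j)
    (hsum : ∀ s : ℝ, 0 ≤ s → Summable fun j : ℕ => A s j ^ 2)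
    (t₀ t b : ℝ) (ht₀ : 0 ≤ t₀) (ht₀t : t₀ ≤ t)
    (key : ∀ N : ℕ, (∑ j ∈ Finset.range (N+1), A t j ^2)
      + 2*ν*(∫ τ in t₀..t, ∑ j ∈ Finset.range (N+1), (2:ℝ)^(2*j) * A τ j ^2)
      ≤ (∑ j ∈ Finset.range (N+1), A t₀ j ^2) + 2*b) :
    (∑' j : ℕ, A t j ^2) + 2*ν*(∫ τ in t₀..t, ∑' j : ℕ, (2:ℝ)^(2*j) * A τ j ^2)
      ≤ (∑' j : ℕ, A t₀ j ^2) + 2*b := by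
  have ht : (0:ℝ) ≤ t := le_trans ht₀ ht₀t
  set g : ℕ → ℝ → ℝ := fun N τ => ∑ j ∈ Finset.range (N+1), (2:ℝ)^(2*j) * A τ j ^2 with hgdef
  have hgcont : ∀ N, Continuous (g N) := fun N =>
    continuous_finset_sum _ fun j _ => continuous_const.mul ((hAcont j).pow 2)
  have hgnonneg : ∀ N τ, 0 ≤ g N τ := fun N τ =>
    Finset.sum_nonneg fun j _ => by positivity
  set I : ℕ → ℝ := fun N => ∫ τ in t₀..t, g N τ with hIdef
  have hInonneg : ∀ N, 0 ≤ I N := fun N =>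
    intervalIntegral.integral_nonneg ht₀t fun τ _ => hgnonneg N τ
  have hImono : Monotone I := by
    intro N M hNM
    apply intervalIntegral.integral_mono_on ht₀t
      ((hgcont N).intervalIntegrable _ _) ((hgcont M).intervalIntegrable _ _)
    intro τ _
    apply Finset.sum_le_sum_of_subset_of_nonneg
      (Finset.range_subset_range.mpr (by omega))
    intro j _ _; positivity
  set S₀ : ℝ := ∑' j : ℕ, A t₀ j ^2 with hS₀
  have hE₀le : ∀ N, (∑ j ∈ Finset.range (N+1), A t₀ j ^2) ≤ S₀ := fun N =>
    Summable.sum_le_tsum _ (fun j _ => by positivity) (hsum t₀ ht₀)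
  have hEtnonneg : ∀ N, (0:ℝ) ≤ ∑ j ∈ Finset.range (N+1), A t j ^2 := fun N =>
    Finset.sum_nonneg fun j _ => by positivity
  have key' : ∀ N, (∑ j ∈ Finset.range (N+1), A t j ^2) + 2*ν*(I N) ≤ S₀ + 2*b :=
    fun N => le_trans (key N) (by linarith [hE₀le N])
  have hIbdd : BddAbove (Set.range I) := by
    refine ⟨(S₀ + 2*b)/(2*ν), ?_⟩
    rintro x ⟨N, rfl⟩
    rw [le_div_iff₀ (by linarith)]
    nlinarith [key' N, hEtnonneg N]
  set L : ℝ := ⨆ N, I N with hL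
  have hL0 : 0 ≤ L := le_trans (hInonneg 0) (le_ciSup hIbdd 0)
  have hIL : Tendsto I atTop (𝓝 L) := tendsto_atTop_ciSup hImono hIbdd
  have hEt : Tendsto (fun N => ∑ j ∈ Finset.range (N+1), A t j ^2) atTop
      (𝓝 (∑' j : ℕ, A t j ^2)) :=
    ((hsum t ht).hasSum.tendsto_sum_nat).comp (tendsto_add_atTop_nat 1)
  have main1 : (∑' j : ℕ, A t j ^2) + 2*ν*L ≤ S₀ + 2*b := by
    apply le_of_tendsto (hEt.add ((hIL.const_mul (2*ν))))
    exact Filter.Eventually.of_forall key'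
  have main2 : (∫ τ in t₀..t, ∑' j : ℕ, (2:ℝ)^(2*j) * A τ j ^2) ≤ L := by
    set h : ℝ → ℝ := fun τ => ∑' j : ℕ, (2:ℝ)^(2*j) * A τ j ^2 with hhdef
    have hhnonneg : ∀ τ, 0 ≤ h τ := fun τ => tsum_nonneg fun j => by positivity
    rw [intervalIntegral.integral_of_le ht₀t]
    set μ := volume.restrict (Set.Ioc t₀ t) with hμ
    by_cases hint : Integrable h μ
    · rw [MeasureTheory.integral_eq_lintegral_of_nonneg_ae
        (Filter.Eventually.of_forall hhnonneg) hint.aestronglyMeasurable]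
      have hptwise : ∀ τ, ENNReal.ofReal (h τ) ≤ ⨆ N, ENNReal.ofReal (g N τ) := by
        intro τ
        by_cases hs : Summable (fun j : ℕ => (2:ℝ)^(2*j) * A τ j ^2)
        · have h1 : ENNReal.ofReal (h τ)
              = ∑' j : ℕ, ENNReal.ofReal ((2:ℝ)^(2*j) * A τ j ^2) :=
            ENNReal.ofReal_tsum_of_nonneg (fun j => by positivity) hs
          rw [h1]
          rw [ENNReal.tsum_eq_iSup_sum' (fun N => Finset.range (N+1)) (by
            intro s
            obtain ⟨n, hn⟩ := s.exists_nat_subset_range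
            exact ⟨n, hn.trans (Finset.range_subset_range.mpr (by omega))⟩)]
          apply iSup_mono
          intro N
          rw [← ENNReal.ofReal_sum_of_nonneg (fun j _ => by positivity)]
        · have : h τ = 0 := tsum_eq_zero_of_not_summable hs
          simp [this]
      have hlint : (∫⁻ τ, ENNReal.ofReal (h τ) ∂μ) ≤ ENNReal.ofReal L := by
        calc (∫⁻ τ, ENNReal.ofReal (h τ) ∂μ)
            ≤ ∫⁻ τ, ⨆ N, ENNReal.ofReal (g N τ) ∂μ := lintegral_mono hptwise
          _ = ⨆ N, ∫⁻ τ, ENNReal.ofReal (g N τ) ∂μ := by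
              apply lintegral_iSup
                (fun N => ((hgcont N).measurable.ennreal_ofReal))
              intro N M hNM τ
              apply ENNReal.ofReal_le_ofReal
              apply Finset.sum_le_sum_of_subset_of_nonneg
                (Finset.range_subset_range.mpr (by omega))
              intro j _ _; positivity
          _ ≤ ENNReal.ofReal L := by
              apply iSup_le
              intro N
              have hintg : Integrable (g N) μ := by
                rw [hμ]
                exact ((hgcont N).integrableOn_Ioc)
              rw [← MeasureTheory.ofReal_integral_eq_lintegral_ofReal hintg
                (Filter.Eventually.of_forall (hgnonneg N))]
              apply ENNReal.ofReal_le_ofReal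
              have : I N = ∫ τ, g N τ ∂μ := by
                rw [hIdef]
                simp only [intervalIntegral.integral_of_le ht₀t, hμ]
              rw [← this]
              exact le_ciSup hIbdd N
      exact ENNReal.toReal_le_of_le_ofReal hL0 hlint
    · rw [MeasureTheory.integral_undef hint]
      exact hL0
  nlinarith [main1, main2, hν]

theorem stmt_11 (ν c f₀ : ℝ) (hν : 0 < ν) (hc : 0 < c) (hf : 0 < f₀)
    (a : ℝ → ℕ → ℝ) (ha : IsSolution ν c f₀ a)
    (hpos : ∀ j : ℕ, 0 ≤ a 0 j) :
    ∀ t₀ t : ℝ, 0 ≤ t₀ → t₀ ≤ t →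
      (∑' j : ℕ, a t j ^ 2)
          + 2 * ν * ∫ τ in t₀..t, ∑' j : ℕ, (2 : ℝ) ^ (2 * j) * a τ j ^ 2
        ≤ (∑' j : ℕ, a t₀ j ^ 2) + 2 * ∫ τ in t₀..t, f₀ * a τ 0 := by
  obtain ⟨hsum, hderiv⟩ := ha
  intro t₀ t ht₀ ht₀t
  have ht : (0:ℝ) ≤ t := le_trans ht₀ ht₀t
  set A : ℝ → ℕ → ℝ := fun s j => a (max s 0) j with hA
  have hAeq : ∀ s : ℝ, 0 ≤ s → A s = a s := fun s hs => by
    simp only [hA, max_eq_left hs]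
  have hAcont : ∀ j, Continuous (fun s => A s j) := by
    intro j
    have h1 : ContinuousOn (fun s => a s j) (Set.Ici 0) := fun x hx =>
      (hderiv j x hx).continuousWithinAt
    exact h1.comp_continuous (continuous_id.max continuous_const) fun x => Set.mem_Ici.mpr (le_max_right _ _)
  have hAderiv : ∀ (j : ℕ) (s : ℝ), 0 ≤ s →
      HasDerivWithinAt (fun u => A u j) (dyadicRHS ν c f₀ (A s) j) (Set.Ici 0) s := by
    intro j s hs
    rw [hAeq s hs]
    exact (hderiv j s hs).congr
      (fun y hy => by simp only [hA, max_eq_left (Set.mem_Ici.mp hy)])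
      (by simp only [hA, max_eq_left hs])
  have hApos : ∀ (s : ℝ), 0 ≤ s → ∀ j, 0 ≤ A s j :=
    dyadic_pos_aux ν c f₀ hf A hAcont hAderiv (by
      intro j
      have : A 0 j = a 0 j := by simp [hA]
      rw [this]; exact hpos j)
  have hAsum : ∀ s : ℝ, 0 ≤ s → Summable fun j : ℕ => A s j ^ 2 := by
    intro s hs
    rw [show (fun j : ℕ => A s j ^ 2) = (fun j : ℕ => a s j ^ 2) by
      funext j; rw [hAeq s hs]]
    exact hsum s hs
  have key := dyadic_key_aux ν c f₀ hν hf A hAcont hAderiv hApos t₀ t ht₀ ht₀t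
  have final := dyadic_limit_aux ν hν A hAcont hAsum t₀ t
    (∫ τ in t₀..t, f₀ * A τ 0) ht₀ ht₀t key
  -- now convert the goal from `a` to `A`
  have e1 : (∑' j : ℕ, a t j ^ 2) = ∑' j : ℕ, A t j ^ 2 := by
    rw [hAeq t ht]
  have e2 : (∑' j : ℕ, a t₀ j ^ 2) = ∑' j : ℕ, A t₀ j ^ 2 := by
    rw [hAeq t₀ ht₀]
  have e3 : (∫ τ in t₀..t, ∑' j : ℕ, (2 : ℝ) ^ (2 * j) * a τ j ^ 2)
      = ∫ τ in t₀..t, ∑' j : ℕ, (2 : ℝ) ^ (2 * j) * A τ j ^ 2 := by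
    apply intervalIntegral.integral_congr
    intro τ hτ
    rw [Set.uIcc_of_le ht₀t] at hτ
    simp only [hAeq τ (le_trans ht₀ hτ.1)]
  have e4 : (∫ τ in t₀..t, f₀ * a τ 0) = ∫ τ in t₀..t, f₀ * A τ 0 := by
    apply intervalIntegral.integral_congr
    intro τ hτ
    rw [Set.uIcc_of_le ht₀t] at hτ
    simp only [hAeq τ (le_trans ht₀ hτ.1)]
  rw [e1, e2, e3, e4]
  exact final
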